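/- Assume that for each (w, k̂) with k̂ > 0, every solution P*(w, k̂) of the linear-shortfall problem sup_P [R(P) + k̂·E[min(W_P − w, 0)]] yields a well-defined probability α*_{k̂}(w) = P(W_{P*} < w) ∈ (0,1), and that the map w ↦ α*_{k̂}(w) is injective on the domain where it lies in (0,1). Then any solution of the linear-shortfall problem with parameters (w, k̂) also solves the EW-ES problem with parameters (α, κ) = (α*_{k̂}(w), α*_{k̂}(w)·k̂). -/

import Mathlib

open MeasureTheory

variable {Ω : Type*} [MeasurableSpace Ω] {A : Type*}

/-- The scalarized EW-ES objective `J(P, w') = R(P) + κ E[w' + (1/α) min(W_P - w', 0)]`. -/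
noncomputable def JES (μ : Measure Ω) (W : A → Ω → ℝ) (R : A → ℝ)
    (α κ : ℝ) (P : A) (w' : ℝ) : ℝ :=
  R P + κ * ∫ ω, (w' + (1 / α) * min (W P ω - w') 0) ∂μ

/-- `P` solves the EW-ES problem `sup_P sup_{w'} J(P, w')` (supremum attained). -/
def solvesES (μ : Measure Ω) (W : A → Ω → ℝ) (R : A → ℝ)
    (α κ : ℝ) (P : A) : Prop :=
  ∃ wstar : ℝ, ∀ (P' : A) (w' : ℝ),
    JES μ W R α κ P' w' ≤ JES μ W R α κ P wstar

/-- `P` solves the EW-LS problem with threshold `w` and coefficient `k̂`. -/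
def solvesLS (μ : Measure Ω) (W : A → Ω → ℝ) (R : A → ℝ)
    (w khat : ℝ) (P : A) : Prop :=
  ∀ P' : A,
    R P' + khat * ∫ ω, min (W P' ω - w) 0 ∂μ
      ≤ R P + khat * ∫ ω, min (W P ω - w) 0 ∂μ

/-- If `α*_{k̂}(w)` is well defined on LS solutions, lies in `(0,1)`, is injective
in `w`, EW-ES solutions exist, and the forward direction (ES ⇒ LS at the VaR
threshold) holds, then any LS solution with parameters `(w, k̂)` solves the
EW-ES problem with parameters `(α*_{k̂}(w), α*_{k̂}(w)·k̂)`. -/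

lemma integrable_min_zero {Ω : Type*} [MeasurableSpace Ω] {μ : Measure Ω} {f : Ω → ℝ}
    (h : Integrable f μ) : Integrable (fun ω => min (f ω) 0) μ := by
  have : (fun ω => min (f ω) 0) = fun ω => (f ω - |f ω|) / 2 := by
    funext ω
    rcases le_total (f ω) 0 with h0 | h0
    · rw [min_eq_left h0, abs_of_nonpos h0]; ring
    · rw [min_eq_right h0, abs_of_nonneg h0]; ring
  rw [this]
  exact (h.sub h.abs).div_const 2

theorem ewls_solution_solves_ewes
    (μ : Measure Ω) [IsProbabilityMeasure μ] [Nonempty A]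
    (W : A → Ω → ℝ) (hW : ∀ P, Integrable (W P) μ) (R : A → ℝ)
    (αstar : ℝ → ℝ → ℝ)
    (hdef : ∀ (khat w : ℝ) (P : A), 0 < khat → solvesLS μ W R w khat P →
      (μ {ω | W P ω < w}).toReal = αstar khat w)
    (hinj : ∀ khat w₁ w₂ : ℝ, 0 < khat →
      αstar khat w₁ ∈ Set.Ioo (0 : ℝ) 1 → αstar khat w₂ ∈ Set.Ioo (0 : ℝ) 1 →
      αstar khat w₁ = αstar khat w₂ → w₁ = w₂)
    (hES_attain : ∀ α κ : ℝ, α ∈ Set.Ioo (0 : ℝ) 1 → 0 < κ →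
      ∃ P : A, solvesES μ W R α κ P)
    (hforward : ∀ (α κ : ℝ) (P : A) (w₀ : ℝ),
      α ∈ Set.Ioo (0 : ℝ) 1 → 0 < κ →
      (∀ (P' : A) (w' : ℝ), JES μ W R α κ P' w' ≤ JES μ W R α κ P w₀) →
      (μ {ω | W P ω < w₀}).toReal = α ∧ solvesLS μ W R w₀ (κ / α) P)
    (w khat : ℝ) (hkhat : 0 < khat)
    (hα : αstar khat w ∈ Set.Ioo (0 : ℝ) 1)
    (Pstar : A) (hPstar : solvesLS μ W R w khat Pstar) :
    solvesES μ W R (αstar khat w) (αstar khat w * khat) Pstar := by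
  set α := αstar khat w with hαdef
  have hα0 : (0:ℝ) < α := hα.1
  set κ := α * khat with hκdef
  have hκ : 0 < κ := mul_pos hα0 hkhat
  obtain ⟨Q, wQ, hQ⟩ := hES_attain α κ hα hκ
  obtain ⟨hmeas, hLSQ⟩ := hforward α κ Q wQ hα hκ hQ
  have hκα : κ / α = khat := by
    rw [hκdef]; field_simp
  rw [hκα] at hLSQ
  have hαQ : αstar khat wQ = α := by
    rw [← hdef khat wQ Q hkhat hLSQ, hmeas]
  have hwQ : wQ = w := by
    refine hinj khat wQ w hkhat ?_ hα hαQ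
    rw [hαQ]; exact hα
  rw [hwQ] at hQ
  -- JES at threshold w decomposes
  have hJES : ∀ P : A, JES μ W R α κ P w = κ * w + (R P + khat * ∫ ω, min (W P ω - w) 0 ∂μ) := by
    intro P
    have hint : Integrable (fun ω => min (W P ω - w) 0) μ :=
      integrable_min_zero ((hW P).sub (integrable_const w))
    have : ∫ ω, (w + (1 / α) * min (W P ω - w) 0) ∂μ
        = w + (1 / α) * ∫ ω, min (W P ω - w) 0 ∂μ := by
      rw [integral_add (integrable_const w) (hint.const_mul _), integral_const,
        integral_const_mul, probReal_univ]
      simp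
    rw [JES, this]
    have hne : α ≠ 0 := ne_of_gt hα0
    field_simp [hκdef]
    ring
  refine ⟨w, fun P' w' => ?_⟩
  have h1 := hQ P' w'
  have h2 := hPstar Q
  rw [hJES Q] at h1
  rw [hJES Pstar]
  linarith
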